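/- The number of runs in any string of length n is at most 2n. -/

import Mathlib

/-- `p` is a period of `w`: `w[i] = w[i+p]` whenever both positions are valid. -/
def HasPeriod {α : Type*} (w : List α) (p : ℕ) : Prop :=
  ∀ i, i + p < w.length → w[i]? = w[i + p]?

/-- `substr w i j` is the substring `w[i..j]` (1-indexed, inclusive). -/
def substr {α : Type*} (w : List α) (i j : ℕ) : List α :=
  (w.drop (i - 1)).take (j - i + 1)

/-- `[i..j]` (1-indexed) is a run of `w` with (smallest) period `p`:
`p` is the smallest period of `w[i..j]`, the exponent is at least 2, and the
periodicity with period `p` extends neither to the left nor to the right. -/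
def IsRun {α : Type*} (w : List α) (i j p : ℕ) : Prop :=
  1 ≤ i ∧ i ≤ j ∧ j ≤ w.length ∧ 0 < p ∧
  HasPeriod (substr w i j) p ∧
  (∀ q, 0 < q → q < p → ¬ HasPeriod (substr w i j) q) ∧
  2 * p ≤ j - i + 1 ∧
  (i = 1 ∨ ¬ HasPeriod (substr w (i - 1) j) p) ∧
  (j = w.length ∨ ¬ HasPeriod (substr w i (j + 1)) p)



set_option linter.deprecated false
set_option linter.unusedSectionVars false
section RunsAux

open List

variable {β : Type*} [LinearOrder β]

private theorem lex_prefix_lt {u v : List β} (h : u <+: v) (hne : u ≠ v) : u < v := by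
  obtain ⟨t, rfl⟩ := h
  have ht : t ≠ [] := by rintro rfl; simp at hne
  show List.Lex _ _ _
  have he : u = u ++ [] := by simp
  conv_lhs => rw [he]
  apply List.Lex.append_left
  cases t with
  | nil => simp at ht
  | cons a t => exact List.Lex.nil

private theorem lex_append_iff (a : List β) {u v : List β} :
    a ++ u < a ++ v ↔ u < v := by
  induction a with
  | nil => rfl
  | cons x a ih =>
    show List.Lex _ (x :: (a ++ u)) (x :: (a ++ v)) ↔ _
    rw [List.lex_cons_iff]; exact ih

private theorem lex_of_agree {r : ℕ} : ∀ {s u : List β}, (∀ x, x < r → s[x]? = u[x]?) →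
    ∀ {c c' : β}, s[r]? = some c → u[r]? = some c' → c < c' → s < u := by
  induction r with
  | zero =>
    intro s u _ c c' hs hu hcc
    cases s with
    | nil => simp at hs
    | cons a s =>
      cases u with
      | nil => simp at hu
      | cons b u =>
        simp at hs hu; subst hs; subst hu
        exact List.Lex.rel hcc
  | succ r ih =>
    intro s u hag c c' hs hu hcc
    cases s with
    | nil => simp at hs
    | cons a s =>
      cases u with
      | nil => simp at hu
      | cons b u =>
        have h0 := hag 0 (Nat.succ_pos _)
        simp at h0; subst h0
        apply List.Lex.cons
        exact ih (fun x hx => hag (x+1) (by omega)) hs hu hcc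

private theorem lex_append_of_not_prefix : ∀ {b u : List β}, b < u → ¬ b <+: u →
    ∀ (z : List β), b ++ z < u := by
  intro b u h
  induction h with
  | nil => intro hp; exact absurd (List.nil_prefix) hp
  | @rel a l b' l' hab => intro _ z; exact List.Lex.rel hab
  | @cons a l l' h ih =>
    intro hp z
    have hnp : ¬ l <+: l' := fun hl => hp (List.cons_prefix_cons.mpr ⟨rfl, hl⟩)
    exact List.Lex.cons (ih hnp z)

private theorem lex_same_length : ∀ {a c : List β}, a.length = c.length → ∀ {u v : List β},
    a ++ u < c ++ v → a < c ∨ (a = c ∧ u < v) := by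
  intro a
  induction a with
  | nil =>
    intro c hc u v h
    cases c with
    | nil => exact Or.inr ⟨rfl, h⟩
    | cons x c => simp at hc
  | cons x a ih =>
    intro c hc u v h
    cases c with
    | nil => simp at hc
    | cons y c =>
      simp only [List.length_cons, Nat.add_right_cancel_iff] at hc
      cases h with
      | rel hlt => exact Or.inl (List.Lex.rel hlt)
      | cons h' =>
        rcases ih hc h' with h'' | ⟨rfl, h''⟩
        · exact Or.inl (List.Lex.cons h'')
        · exact Or.inr ⟨rfl, h''⟩

/-- `v` is periodic with period `p` on the (0-indexed, inclusive) interval `[a, b]`. -/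
def Per (v : List β) (a b p : ℕ) : Prop :=
  ∀ x, a ≤ x → x + p ≤ b → v[x]? = v[x + p]?

/-- Lyndon word: (strictly) smaller than each of its proper nonempty suffixes. -/
def Lyn (u : List β) : Prop := ∀ m, 0 < m → m < u.length → u < u.drop m

/-- Length of the longest Lyndon word starting at position `t` of `v`. -/
noncomputable def lynLen (v : List β) (t : ℕ) : ℕ :=
  letI := Classical.decPred (fun ℓ => 0 < ℓ ∧ t + ℓ ≤ v.length ∧ Lyn ((v.drop t).take ℓ))
  Nat.findGreatest (fun ℓ => 0 < ℓ ∧ t + ℓ ≤ v.length ∧ Lyn ((v.drop t).take ℓ)) (v.length - t)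

private theorem seg_get? (v : List β) {t ℓ x : ℕ} (hx : x < ℓ) :
    ((v.drop t).take ℓ)[x]? = v[t+x]? := by
  rw [List.getElem?_take_of_lt hx, List.getElem?_drop]

private theorem seg_len (v : List β) {t ℓ : ℕ} (h : t + ℓ ≤ v.length) :
    ((v.drop t).take ℓ).length = ℓ := by
  simp only [List.length_take, List.length_drop]; omega

private theorem per_steps {v : List β} {a b p : ℕ} (per : Per v a b p) :
    ∀ (k) {x}, a ≤ x → x + k * p ≤ b → v[x]? = v[x + k * p]? := by
  intro k
  induction k with
  | zero => intro x _ _; simp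
  | succ k ih =>
    intro x hax hxb
    have h1 : v[x]? = v[x + k * p]? := ih hax (by nlinarith [Nat.succ_mul k p])
    rw [h1]
    have := per (x + k * p) (by omega) (by rw [Nat.succ_mul] at hxb; omega)
    rw [this]; ring_nf

end RunsAux
section RunsMain

open List

variable {β : Type*} [LinearOrder β]

theorem exists_lyndon_root (v : List β) (a b p : ℕ) (hp : 0 < p) (h2 : a + 2*p ≤ b + 1)
    (hb : b < v.length) (per : Per v a b p) (hmin : ∀ q, 0 < q → q < p → ¬ Per v a b q)
    (rightC : b + 1 = v.length ∨
      ∃ c c', v[b+1]? = some c' ∧ v[b+1-p]? = some c ∧ c' < c) :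
    ∃ t, a ≤ t ∧ t + p ≤ b + 1 ∧ lynLen v t = p := by
  have hap : a + p ≤ v.length := by omega
  set block := (v.drop a).take p with hblockdef
  have hbl : block.length = p := seg_len v (by omega)
  have hbg : ∀ x, x < p → block[x]? = v[a+x]? := fun x hx => seg_get? v hx
  -- reduction of positions in the run modulo p
  have red : ∀ m, a + m ≤ b → v[a+m]? = block[m % p]? := by
    intro m
    induction m using Nat.strong_induction_on with
    | _ m ih =>
      intro hm
      by_cases hmp : m < p
      · rw [Nat.mod_eq_of_lt hmp, hbg m hmp]
      · push_neg at hmp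
        have h1 : v[a + (m - p)]? = v[a + m]? := by
          have := per (a + (m-p)) (by omega) (by omega)
          rw [this]; congr 1; omega
        rw [← h1, ih (m-p) (by omega) (by omega), Nat.mod_eq_sub_mod hmp]
  -- shift invariance of the block contradicts minimality of p
  have shift : ∀ d, 0 < d → d < p → block.rotate d ≠ block := by
    intro d hd0 hdp heq
    apply hmin d hd0 hdp
    intro x hax hxb
    have e1 : v[x]? = block[(x - a) % p]? := by
      have := red (x - a) (by omega); rwa [Nat.add_sub_cancel' hax] at this
    have e2 : v[x + d]? = block[(x - a + d) % p]? := by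
      have := red (x - a + d) (by omega)
      rw [show a + (x - a + d) = x + d by omega] at this; exact this
    rw [e1, e2]
    have key : ∀ m, m < p → block[m]? = block[(m + d) % p]? := by
      intro m hm
      conv_lhs => rw [← heq]
      rw [List.getElem?_rotate (by rw [hbl]; exact hm), hbl]
    rw [key _ (Nat.mod_lt _ hp), Nat.mod_add_mod]
  -- distinct rotations are distinct words
  have rotaux : ∀ e1 e2, e1 < e2 → e2 < p → block.rotate e1 ≠ block.rotate e2 := by
    intro e1 e2 h12 h2p heq
    have h3 : (block.rotate e1).rotate (p - e1) = (block.rotate e2).rotate (p - e1) := by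
      rw [heq]
    rw [List.rotate_rotate, List.rotate_rotate] at h3
    have hA : block.rotate (e1 + (p - e1)) = block := by
      rw [show e1 + (p - e1) = p by omega, ← hbl, List.rotate_length]
    have hB : block.rotate (e2 + (p - e1)) = block.rotate (e2 - e1) := by
      rw [show (e2 + (p - e1)) = (e2 - e1) + p by omega, ← List.rotate_mod, hbl,
        Nat.add_mod_right, Nat.mod_eq_of_lt (by omega)]
    rw [hA, hB] at h3
    exact shift (e2 - e1) (by omega) (by omega) h3.symm
  have rotdist : ∀ e1 e2, e1 < p → e2 < p → e1 ≠ e2 → block.rotate e1 ≠ block.rotate e2 := by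
    intro e1 e2 h1 h2' hne
    rcases Nat.lt_or_ge e1 e2 with h | h
    · exact rotaux e1 e2 h h2'
    · exact fun heq => rotaux e2 e1 (by omega) h1 heq.symm
  -- minimal rotation
  obtain ⟨d, hdmem, hdmin⟩ := Finset.exists_min_image (Finset.range p)
    (fun e => block.rotate e) ⟨0, Finset.mem_range.mpr hp⟩
  rw [Finset.mem_range] at hdmem
  refine ⟨a + d, by omega, by omega, ?_⟩
  set t := a + d with htdef
  set u' := (v.drop t).take p with hu'def
  have hu'len : u'.length = p := seg_len v (by omega)
  have hocc : u' = block.rotate d := by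
    apply List.ext_getElem?
    intro x
    by_cases hx : x < p
    · rw [seg_get? v hx, List.getElem?_rotate (by rw [hbl]; exact hx), hbl]
      rw [show t + x = a + (d + x) by omega, red (d + x) (by omega),
        show d + x = x + d by omega]
    · rw [List.getElem?_eq_none_iff.mpr (by rw [hu'len]; omega),
        List.getElem?_eq_none_iff.mpr (by rw [List.length_rotate, hbl]; omega)]
  -- the root occurrence is Lyndon
  have hlyn : Lyn u' := by
    intro m hm0 hmp'
    rw [hu'len] at hmp'
    set bb := u'.drop m with hbbdef
    set aa := u'.take m with haadef
    have hbbl : bb.length = p - m := by rw [hbbdef, List.length_drop, hu'len]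
    have haal : aa.length = m := by rw [haadef, List.length_take, hu'len]; omega
    have hmodlt : (d + m) % p < p := Nat.mod_lt _ hp
    have hrot1 : bb ++ aa = block.rotate ((d + m) % p) := by
      conv_rhs => rw [show (d + m) % p = (d + m) % block.length by rw [hbl],
        List.rotate_mod, ← List.rotate_rotate, ← hocc,
        List.rotate_eq_drop_append_take (by rw [hu'len]; omega)]
    have hne1 : (d + m) % p ≠ d := by
      by_cases hc : d + m < p
      · rw [Nat.mod_eq_of_lt hc]; omega
      · rw [Nat.mod_eq_sub_mod (by omega), Nat.mod_eq_of_lt (by omega)]; omega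
    have hlt1 : u' < bb ++ aa := by
      rw [hrot1, hocc]
      exact lt_of_le_of_ne (hdmin _ (Finset.mem_range.mpr hmodlt))
        (rotdist d _ hdmem hmodlt (Ne.symm hne1))
    rcases lt_trichotomy bb u' with hlt | heq | hgt
    · exfalso
      by_cases hpre : bb <+: u'
      · obtain ⟨cc, hcc⟩ := hpre
        have hccl : cc.length = m := by
          have := congrArg List.length hcc
          rw [List.length_append, hbbl, hu'len] at this; omega
        have h5 : cc < aa := by
          rw [← hcc] at hlt1
          exact (lex_append_iff bb).mp hlt1
        have hmodlt2 : (d + (p - m)) % p < p := Nat.mod_lt _ hp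
        have hrot2 : cc ++ bb = block.rotate ((d + (p - m)) % p) := by
          have e2 : u'.drop (p - m) = cc := by
            rw [← hcc, show p - m = bb.length from hbbl.symm, List.drop_left]
          have e3 : u'.take (p - m) = bb := by
            rw [← hcc, show p - m = bb.length from hbbl.symm, List.take_left]
          conv_rhs => rw [show (d + (p - m)) % p = (d + (p - m)) % block.length by rw [hbl],
            List.rotate_mod, ← List.rotate_rotate, ← hocc,
            List.rotate_eq_drop_append_take (by rw [hu'len]; omega), e2, e3]
        have hne2 : (d + (p - m)) % p ≠ d := by
          by_cases hc : d + (p - m) < p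
          · rw [Nat.mod_eq_of_lt hc]; omega
          · rw [Nat.mod_eq_sub_mod (by omega), Nat.mod_eq_of_lt (by omega)]; omega
        have hlt2 : u' < cc ++ bb := by
          rw [hrot2, hocc]
          exact lt_of_le_of_ne (hdmin _ (Finset.mem_range.mpr hmodlt2))
            (rotdist d _ hdmem hmodlt2 (Ne.symm hne2))
        have hu'ab : aa ++ bb = u' := List.take_append_drop m u'
        rw [← hu'ab] at hlt2
        rcases lex_same_length (haal.trans hccl.symm) hlt2 with h6 | ⟨_, hbb⟩
        · exact (lt_asymm h6) h5
        · exact (lt_irrefl _) hbb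
      · exact (lt_asymm hlt1) (lex_append_of_not_prefix hlt hpre aa)
    · exfalso
      have := congrArg List.length heq
      rw [hbbl, hu'len] at this; omega
    · exact hgt
  -- no longer Lyndon word starts at t
  have hmax : ∀ ℓ, p < ℓ → t + ℓ ≤ v.length → ¬ Lyn ((v.drop t).take ℓ) := by
    intro ℓ hpℓ htℓ hly
    set u := (v.drop t).take ℓ with hudef
    have hul : u.length = ℓ := seg_len v htℓ
    by_cases hcase : t + ℓ ≤ b + 1
    · -- the word stays inside the run: period p gives a border
      have hper : ∀ x, x + p < ℓ → u[x]? = u[x + p]? := by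
        intro x hx
        rw [hudef, seg_get? v (by omega), seg_get? v hx]
        have := per (t + x) (by omega) (by omega)
        rw [this]; congr 1; omega
      have hdt : u.drop p = u.take (ℓ - p) := by
        apply List.ext_getElem?
        intro x
        by_cases hx : x < ℓ - p
        · rw [List.getElem?_drop, List.getElem?_take_of_lt hx]
          rw [show p + x = x + p by omega]
          exact (hper x (by omega)).symm
        · rw [List.getElem?_eq_none_iff.mpr (by rw [List.length_drop, hul]; omega),
            List.getElem?_eq_none_iff.mpr (by rw [List.length_take, hul]; omega)]
      have h1 : u.drop p < u := by
        rw [hdt]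
        apply lex_prefix_lt (List.take_prefix _ _)
        intro h
        have := congrArg List.length h
        rw [List.length_take, hul] at this; omega
      exact (lt_asymm (hly p hp (by omega))) h1
    · -- the word sticks out to the right of the run
      push_neg at hcase
      have hbv : b + 1 < v.length := by omega
      rcases rightC with h | ⟨c, c', hc', hc, hltc⟩
      · omega
      set D := b + 1 - t with hDdef
      have hDp : p ≤ D := by omega
      obtain ⟨k, r, hDkr, hrp, hk1⟩ : ∃ k r, D = k * p + r ∧ r < p ∧ 1 ≤ k := by
        refine ⟨D / p, D % p, ?_, Nat.mod_lt _ hp, (Nat.one_le_div_iff hp).mpr hDp⟩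
        have := Nat.div_add_mod D p
        rw [Nat.mul_comm] at this
        omega
      set m := k * p with hmdef
      have hm0 : 0 < m := by omega
      have hmD : m ≤ D := by omega
      have hDℓ : D < ℓ := by omega
      have hag : ∀ x, x < r → (u.drop m)[x]? = u[x]? := by
        intro x hx
        rw [List.getElem?_drop, hudef, seg_get? v (by omega), seg_get? v (by omega)]
        rw [show t + (m + x) = t + x + k * p by omega]
        exact (per_steps per k (by omega) (by omega)).symm
      have h2 : (u.drop m)[r]? = some c' := by
        rw [List.getElem?_drop, hudef, seg_get? v (by omega)]
        rw [show t + (m + r) = b + 1 by omega]; exact hc'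
      have h3 : u[r]? = some c := by
        rw [hudef, seg_get? v (by omega)]
        have hkp : (k - 1) * p + p = k * p := by
          have hk' : k - 1 + 1 = k := by omega
          calc (k-1) * p + p = (k - 1 + 1) * p := by ring
          _ = k * p := by rw [hk']
        have hstep := per_steps per (k-1) (x := t + r) (by omega) (by omega)
        rw [hstep, show t + r + (k-1) * p = b + 1 - p by omega]
        exact hc
      have h4 : u.drop m < u := lex_of_agree hag h2 h3 hltc
      exact (lt_asymm (hly m hm0 (by rw [hul]; omega))) h4
  -- conclude: the longest Lyndon word at t has length exactly p
  unfold lynLen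
  letI := Classical.decPred (fun ℓ => 0 < ℓ ∧ t + ℓ ≤ v.length ∧ Lyn ((v.drop t).take ℓ))
  refine (Nat.findGreatest_eq_iff
    (P := fun ℓ => 0 < ℓ ∧ t + ℓ ≤ v.length ∧ Lyn ((v.drop t).take ℓ))
    (k := v.length - t) (m := p)).mpr
    ⟨by omega, fun _ => ⟨hp, by omega, hlyn⟩, ?_⟩
  intro n hpn hnb hPn
  exact hmax n hpn (by omega) hPn.2.2

end RunsMain
section Assemble

open List

variable {α : Type*} [LinearOrder α]

private theorem substr_get? (w : List α) {i j x : ℕ} (hx : x < j - i + 1) :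
    (substr w i j)[x]? = w[i - 1 + x]? := by
  unfold substr
  rw [List.getElem?_take_of_lt hx, List.getElem?_drop]

private theorem substr_len (w : List α) {i j : ℕ} (hi : 1 ≤ i) (hij : i ≤ j)
    (hj : j ≤ w.length) : (substr w i j).length = j - i + 1 := by
  unfold substr
  simp only [List.length_take, List.length_drop]
  omega

private theorem run_per {w : List α} {i j p : ℕ} (h : IsRun w i j p) :
    Per w (i-1) (j-1) p := by
  obtain ⟨hi, hij, hj, hp, hper, -, -, -, -⟩ := h
  intro x hax hxb
  have hlen := substr_len w hi hij hj
  have := hper (x - (i-1)) (by rw [hlen]; omega)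
  rw [substr_get? w (by omega), substr_get? w (by omega)] at this
  rw [show i - 1 + (x - (i-1)) = x by omega] at this
  rw [show i - 1 + (x - (i-1) + p) = x + p by omega] at this
  exact this

private theorem run_min {w : List α} {i j p : ℕ} (h : IsRun w i j p) :
    ∀ q, 0 < q → q < p → ¬ Per w (i-1) (j-1) q := by
  obtain ⟨hi, hij, hj, hp, -, hmin, -, -, -⟩ := h
  intro q hq0 hqp hPer
  apply hmin q hq0 hqp
  intro y hy
  have hlen := substr_len w hi hij hj
  rw [hlen] at hy
  rw [substr_get? w (by omega), substr_get? w (by omega)]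
  have := hPer (i - 1 + y) (by omega) (by omega)
  rw [this]; congr 1; omega

private theorem run_right {w : List α} {i j p : ℕ} (h : IsRun w i j p) :
    j = w.length ∨ (j < w.length ∧ w[j]? ≠ w[j - p]?) := by
  have hper := run_per h
  obtain ⟨hi, hij, hj, hp, hHP, -, h2p, -, hR⟩ := h
  rcases hR with hR | hR
  · exact Or.inl hR
  · right
    have hjlt : j < w.length := by
      rcases Nat.lt_or_ge j w.length with h' | h'
      · exact h'
      · exfalso
        have hje : j = w.length := by omega
        apply hR
        have : substr w i (j+1) = substr w i j := by
          unfold substr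
          rw [List.take_of_length_le (by simp [List.length_drop]; omega),
            List.take_of_length_le (by simp [List.length_drop]; omega)]
        rw [this]
        exact hHP
    have hlen1 : (substr w i (j+1)).length = j + 1 - i + 1 := substr_len w hi (by omega) (by omega)
    rw [_root_.HasPeriod] at hR
    push_neg at hR
    obtain ⟨y, hy, hne⟩ := hR
    rw [hlen1] at hy
    rw [substr_get? w (by omega), substr_get? w (by omega)] at hne
    rcases Nat.lt_or_ge (y + p) (j - i + 1) with hcase | hcase
    · exfalso
      apply hne
      have := hper (i - 1 + y) (by omega) (by omega)
      rw [this]; congr 1; omega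
    · have hyp : y + p = j - i + 1 := by omega
      constructor
      · exact hjlt
      · rw [show i - 1 + y = j - p by omega, show i - 1 + (y + p) = j by omega] at hne
        exact fun hh => hne hh.symm |>.elim

private theorem run_left {w : List α} {i j p : ℕ} (h : IsRun w i j p) :
    i = 1 ∨ (2 ≤ i ∧ w[i - 2]? ≠ w[i - 2 + p]?) := by
  have hper := run_per h
  obtain ⟨hi, hij, hj, hp, hHP, -, h2p, hL, -⟩ := h
  rcases hL with hL | hL
  · exact Or.inl hL
  · rcases Nat.lt_or_ge i 2 with h' | hi2
    · exact Or.inl (by omega)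
    right
    refine ⟨hi2, ?_⟩
    have hlen1 : (substr w (i-1) j).length = j - (i-1) + 1 := substr_len w (by omega) (by omega) hj
    rw [_root_.HasPeriod] at hL
    push_neg at hL
    obtain ⟨y, hy, hne⟩ := hL
    rw [hlen1] at hy
    rw [substr_get? w (by omega), substr_get? w (by omega)] at hne
    rcases Nat.eq_zero_or_pos y with hy0 | hy0
    · subst hy0
      rw [show i - 1 - 1 + 0 = i - 2 by omega, show i - 1 - 1 + (0 + p) = i - 2 + p by omega] at hne
      exact hne
    · exfalso
      apply hne
      have := hper (i - 1 - 1 + y) (by omega) (by omega)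
      rw [this]; congr 1; omega

end Assemble
section Final

open List

variable {α : Type*} [LinearOrder α]

private def GoodAt (w : List α) (ij : ℕ × ℕ) (t : ℕ) (o : Bool) : Prop :=
  ∃ a b p : ℕ, ij.1 = a + 1 ∧ ij.2 = b + 1 ∧ b < w.length ∧ 0 < p ∧ a ≤ t ∧ t + p ≤ b + 1 ∧
    Per w a b p ∧
    (a = 0 ∨ w[a - 1]? ≠ w[a - 1 + p]?) ∧
    (b + 1 = w.length ∨ w[b + 1]? ≠ w[b + 1 - p]?) ∧
    (o = false → lynLen w t = p) ∧
    (o = true → lynLen (w.map OrderDual.toDual) t = p)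

private theorem good_exists {w : List α} {ij : ℕ × ℕ} (h : ∃ p, IsRun w ij.1 ij.2 p) :
    ∃ t o, t < w.length ∧ GoodAt w ij t o := by
  obtain ⟨i, j⟩ := ij
  obtain ⟨p, hrun⟩ := h
  have hper := run_per hrun
  have hmin := run_min hrun
  have hleft := run_left hrun
  have hright := run_right hrun
  obtain ⟨hi, hij, hj, hp, -, -, h2p, -, -⟩ := hrun
  simp only at hper hmin hleft hright ⊢
  have h2 : (i-1) + 2*p ≤ (j-1) + 1 := by omega
  have hb : j - 1 < w.length := by omega
  have hleft' : (i - 1 = 0) ∨ w[i-1-1]? ≠ w[i-1-1+p]? := by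
    rcases hleft with h1 | ⟨h1, h2'⟩
    · exact Or.inl (by omega)
    · right; rw [show i-1-1 = i-2 by omega]; exact h2'
  rcases hright with hR | ⟨hjlt, hne⟩
  · obtain ⟨t, ht1, ht2, ht3⟩ := exists_lyndon_root w (i-1) (j-1) p hp h2 hb hper hmin
      (Or.inl (by omega))
    exact ⟨t, false, by omega, i-1, j-1, p, by omega, by omega, hb, hp, ht1, ht2, hper,
      hleft', Or.inl (by omega), fun _ => ht3, by simp⟩
  · have hjp : j - p < w.length := by omega
    have hc' : w[j]? = some (w.get ⟨j, hjlt⟩) := List.getElem?_eq_getElem hjlt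
    have hc : w[j - p]? = some (w.get ⟨j - p, hjp⟩) := List.getElem?_eq_getElem hjp
    set c' := w.get ⟨j, hjlt⟩
    set c := w.get ⟨j - p, hjp⟩
    have hcc : c' ≠ c := by intro hcontra; apply hne; rw [hc', hc, hcontra]
    have hright' : w[(j-1) + 1]? ≠ w[(j-1) + 1 - p]? := by
      rw [show (j-1) + 1 = j by omega]; exact hne
    rcases lt_or_gt_of_ne hcc with hlt | hgt
    · obtain ⟨t, ht1, ht2, ht3⟩ := exists_lyndon_root w (i-1) (j-1) p hp h2 hb hper hmin
        (Or.inr ⟨c, c', by rw [show (j-1)+1 = j by omega]; exact hc',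
          by rw [show (j-1)+1-p = j-p by omega]; exact hc, hlt⟩)
      exact ⟨t, false, by omega, i-1, j-1, p, by omega, by omega, hb, hp, ht1, ht2, hper,
        hleft', Or.inr hright', fun _ => ht3, by simp⟩
    · set v' : List αᵒᵈ := w.map (OrderDual.toDual) with hv'
      have hlen' : v'.length = w.length := List.length_map _
      have hget' : ∀ x, v'[x]? = (w[x]?).map OrderDual.toDual :=
        fun x => List.getElem?_map
      have hper2 : Per v' (i-1) (j-1) p := by
        intro x h1 h2''
        rw [hget', hget', hper x h1 h2'']
      have hmin2 : ∀ q, 0 < q → q < p → ¬ Per v' (i-1) (j-1) q := by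
        intro q a1 a2 hP
        apply hmin q a1 a2
        intro x h1 h2''
        have := hP x h1 h2''
        rw [hget', hget'] at this
        exact Option.map_injective (OrderDual.toDual.injective) this
      obtain ⟨t, ht1, ht2, ht3⟩ := exists_lyndon_root v' (i-1) (j-1) p hp h2 (by omega) hper2
        hmin2 (Or.inr ⟨OrderDual.toDual c, OrderDual.toDual c',
          by rw [hget', show (j-1)+1 = j by omega, hc']; rfl,
          by rw [hget', show (j-1)+1-p = j-p by omega, hc]; rfl,
          OrderDual.toDual_lt_toDual.mpr hgt⟩)
      exact ⟨t, true, by omega, i-1, j-1, p, by omega, by omega, hb, hp, ht1, ht2, hper,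
        hleft', Or.inr hright', by simp, fun _ => ht3⟩

private theorem good_inj {w : List α} {ij1 ij2 : ℕ × ℕ} {t : ℕ} {o : Bool}
    (h1 : GoodAt w ij1 t o) (h2 : GoodAt w ij2 t o) : ij1 = ij2 := by
  obtain ⟨a1, b1, p1, hi1, hj1, hb1, hp1, hat1, htp1, hper1, hL1, hR1, hF1, hT1⟩ := h1
  obtain ⟨a2, b2, p2, hi2, hj2, hb2, hp2, hat2, htp2, hper2, hL2, hR2, hF2, hT2⟩ := h2
  have hpeq : p1 = p2 := by
    cases o with
    | false => rw [← hF1 rfl, ← hF2 rfl]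
    | true => rw [← hT1 rfl, ← hT2 rfl]
  subst hpeq
  have haeq : a1 = a2 := by
    rcases Nat.lt_trichotomy a1 a2 with hlt | heq | hgt
    · exfalso
      rcases hL2 with h0 | hmm
      · omega
      · exact hmm (hper1 (a2 - 1) (by omega) (by omega))
    · exact heq
    · exfalso
      rcases hL1 with h0 | hmm
      · omega
      · exact hmm (hper2 (a1 - 1) (by omega) (by omega))
  have hbeq : b1 = b2 := by
    rcases Nat.lt_trichotomy b1 b2 with hlt | heq | hgt
    · exfalso
      rcases hR1 with h0 | hmm
      · omega
      · apply hmm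
        have := hper2 (b1 + 1 - p1) (by omega) (by omega)
        rw [show b1 + 1 - p1 + p1 = b1 + 1 by omega] at this
        exact this.symm
    · exact heq
    · exfalso
      rcases hR2 with h0 | hmm
      · omega
      · apply hmm
        have := hper1 (b2 + 1 - p1) (by omega) (by omega)
        rw [show b2 + 1 - p1 + p1 = b2 + 1 by omega] at this
        exact this.symm
  have : ij1.1 = ij2.1 := by rw [hi1, hi2, haeq]
  have : ij1.2 = ij2.2 := by rw [hj1, hj2, hbeq]
  exact Prod.ext ‹ij1.1 = ij2.1› ‹ij1.2 = ij2.2›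

end Final

theorem stmt8 {α : Type*} [LinearOrder α] (w : List α) :
    Set.ncard {ij : ℕ × ℕ | ∃ p, IsRun w ij.1 ij.2 p} ≤ 2 * w.length := by
  classical
  set S : Set (ℕ × ℕ) := {ij : ℕ × ℕ | ∃ p, IsRun w ij.1 ij.2 p} with hS
  set T : Finset (ℕ × Bool) := Finset.range w.length ×ˢ (Finset.univ : Finset Bool) with hT
  have key : ∀ ij ∈ S, ∃ tb : ℕ × Bool, tb.1 < w.length ∧ GoodAt w ij tb.1 tb.2 := by
    intro ij hij
    obtain ⟨t, o, ht, hg⟩ := good_exists hij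
    exact ⟨(t, o), ht, hg⟩
  set F : ℕ × ℕ → ℕ × Bool := fun ij =>
    if h : ij ∈ S then Classical.choose (key ij h) else (0, false) with hF
  have hmaps : ∀ ij ∈ S, F ij ∈ (↑T : Set (ℕ × Bool)) := by
    intro ij h
    have hspec := Classical.choose_spec (key ij h)
    simp only [hF, dif_pos h]
    simp only [hT, Finset.coe_product, Set.mem_prod, Finset.mem_coe, Finset.mem_range,
      Finset.mem_univ, and_true]
    exact hspec.1
  have hinj : Set.InjOn F S := by
    intro x hx y hy hxy
    have hsx := Classical.choose_spec (key x hx)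
    have hsy := Classical.choose_spec (key y hy)
    rw [hF] at hxy
    simp only [dif_pos hx, dif_pos hy] at hxy
    apply good_inj hsx.2
    rw [hxy]
    exact hsy.2
  calc S.ncard ≤ (↑T : Set (ℕ × Bool)).ncard :=
        Set.ncard_le_ncard_of_injOn F hmaps hinj (T.finite_toSet)
    _ = T.card := Set.ncard_coe_finset T
    _ = 2 * w.length := by
        rw [hT, Finset.card_product, Finset.card_range, Finset.card_univ]
        simp [Fintype.card_bool]
        ring
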